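/- Fix q ∈ R^n with Σᵢ qᵢ = 1 and 1/n < t < 1. Define v(z) ∈ R^n by v(z)ᵢ = max(0, qᵢ − z) and h(z) = √t·‖v(z)‖₂ + z for z < max_i qᵢ, h(z) = z otherwise. Then h(z) is a lower bound for the Lagrange dual function of the problem max{p·q : p ≥ 0, Σpᵢ = 1, p·p ≤ t}, and min_z h(z) equals max{p·q : p ∈ P(t)}. -/

import Mathlib

lemma my_cs {n : ℕ} (f g : Fin n → ℝ) :
    ∑ i, f i * g i ≤ Real.sqrt (∑ i, f i ^ 2) * Real.sqrt (∑ i, g i ^ 2) := by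
  have h1 := Finset.sum_mul_sq_le_sq_mul_sq Finset.univ f g
  have h2 : (∑ i, f i * g i) ≤ Real.sqrt ((∑ i, f i * g i) ^ 2) := by
    rw [Real.sqrt_sq_eq_abs]; exact le_abs_self _
  calc ∑ i, f i * g i ≤ Real.sqrt ((∑ i, f i * g i) ^ 2) := h2
    _ ≤ Real.sqrt ((∑ i, f i ^ 2) * ∑ i, g i ^ 2) := Real.sqrt_le_sqrt h1
    _ = _ := Real.sqrt_mul (by positivity) _

set_option maxHeartbeats 1000000 in
theorem stmt_18 {n : ℕ} (hn : 0 < n) (t : ℝ) (ht1 : 1 / (n : ℝ) < t) (ht2 : t < 1)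
    (q : Fin n → ℝ) (hq : ∑ i, q i = 1)
    (v : ℝ → Fin n → ℝ) (hv : v = fun z i => max 0 (q i - z))
    (h : ℝ → ℝ)
    (hh : h = fun z => if z < Finset.univ.sup' (Finset.univ_nonempty_iff.mpr
        (Fin.pos_iff_nonempty.mp hn)) q
      then Real.sqrt t * Real.sqrt (∑ i, v z i ^ 2) + z else z) :
    (∀ (z w : ℝ) (u : Fin n → ℝ), (∀ i, 0 ≤ u i) → 0 ≤ w →
      ∀ M : ℝ, (∀ p : Fin n → ℝ,
          (∑ i, p i * q i) - w * ((∑ i, p i * p i) - t) - z * ((∑ i, p i) - 1)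
            + ∑ i, u i * p i ≤ M) →
        h z ≤ M) ∧
    ∃ m : ℝ, IsLeast (Set.range h) m ∧
      IsGreatest {x : ℝ | ∃ p : Fin n → ℝ,
          ((∀ i, 0 ≤ p i) ∧ ∑ i, p i = 1 ∧ ∑ i, p i * p i ≤ t) ∧
          x = ∑ i, p i * q i} m := by
  have hne : (Finset.univ : Finset (Fin n)).Nonempty :=
    Finset.univ_nonempty_iff.mpr (Fin.pos_iff_nonempty.mp hn)
  set qm : ℝ := Finset.univ.sup' hne q with hqm
  have hn0 : (0:ℝ) < n := Nat.cast_pos.mpr hn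
  have ht0 : (0:ℝ) < t := lt_trans (by positivity) ht1
  obtain ⟨j, -, hj⟩ := Finset.exists_mem_eq_sup' hne q
  have hqle : ∀ i, q i ≤ qm := fun i => Finset.le_sup' q (Finset.mem_univ i)
  -- basic facts about v
  have hv0 : ∀ z i, 0 ≤ v z i := by rw [hv]; intro z i; exact le_max_left _ _
  have hvle : ∀ z i, q i - z ≤ v z i := by rw [hv]; intro z i; exact le_max_right _ _
  have hvsq : ∀ z i, v z i * (q i - z) = v z i ^ 2 := by
    intro z i
    rw [hv]
    simp only
    rcases le_total (q i - z) 0 with hle | hle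
    · rw [max_eq_left hle]; ring
    · rw [max_eq_right hle]; ring
  have hNpos : ∀ z, z < qm → 0 < Real.sqrt (∑ i, v z i ^ 2) := by
    intro z hz
    apply Real.sqrt_pos.mpr
    have hj2 : 0 < v z j ^ 2 := by
      have hzj : z < q j := by rw [hqm, hj] at hz; exact hz
      have : 0 < v z j := lt_of_lt_of_le (by linarith) (hvle z j)
      positivity
    refine lt_of_lt_of_le hj2
      (Finset.single_le_sum (f := fun i => v z i ^ 2) (fun i _ => sq_nonneg _) (Finset.mem_univ j))
  -- weak duality
  have hwd : ∀ (z : ℝ) (p : Fin n → ℝ), (∀ i, 0 ≤ p i) → ∑ i, p i = 1 →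
      ∑ i, p i * p i ≤ t → ∑ i, p i * q i ≤ h z := by
    intro z p hp0 hp1 hpt
    rw [hh]
    simp only
    split_ifs with hz
    · have e1 : ∑ i, p i * q i = (∑ i, p i * (q i - z)) + z := by
        rw [Finset.sum_congr rfl (fun i _ => by ring : ∀ i ∈ Finset.univ,
          p i * (q i - z) = p i * q i - z * p i), Finset.sum_sub_distrib, ← Finset.mul_sum, hp1]
        ring
      have e2 : ∑ i, p i * (q i - z) ≤ ∑ i, p i * v z i :=
        Finset.sum_le_sum fun i _ => mul_le_mul_of_nonneg_left (hvle z i) (hp0 i)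
      have e3 : ∑ i, p i * v z i ≤ Real.sqrt (∑ i, p i ^ 2) * Real.sqrt (∑ i, v z i ^ 2) :=
        my_cs _ _
      have e4 : Real.sqrt (∑ i, p i ^ 2) ≤ Real.sqrt t := by
        apply Real.sqrt_le_sqrt
        calc ∑ i, p i ^ 2 = ∑ i, p i * p i := by
              exact Finset.sum_congr rfl fun i _ => sq (p i)
          _ ≤ t := hpt
      have e5 : Real.sqrt (∑ i, p i ^ 2) * Real.sqrt (∑ i, v z i ^ 2)
          ≤ Real.sqrt t * Real.sqrt (∑ i, v z i ^ 2) :=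
        mul_le_mul_of_nonneg_right e4 (Real.sqrt_nonneg _)
      linarith
    · push_neg at hz
      calc ∑ i, p i * q i ≤ ∑ i, p i * qm :=
            Finset.sum_le_sum fun i _ => mul_le_mul_of_nonneg_left (hqle i) (hp0 i)
        _ = qm := by rw [← Finset.sum_mul, hp1, one_mul]
        _ ≤ z := hz
  constructor
  · -- Part (1): h z is a lower bound for the dual function
    intro z w u hu hw M hM
    rw [hh]
    simp only
    split_ifs with hz
    · set N := Real.sqrt (∑ i, v z i ^ 2) with hN
      have hNp : 0 < N := hNpos z hz
      have hNsq : N * N = ∑ i, v z i ^ 2 := Real.mul_self_sqrt (by positivity)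
      have est : Real.sqrt t * Real.sqrt t = t := Real.mul_self_sqrt ht0.le
      set p : Fin n → ℝ := fun i => Real.sqrt t * v z i / N with hp
      have hp0 : ∀ i, 0 ≤ p i := fun i =>
        div_nonneg (mul_nonneg (Real.sqrt_nonneg t) (hv0 z i)) hNp.le
      have hpp : ∑ i, p i * p i = t := by
        have e : ∀ i ∈ Finset.univ, p i * p i
            = (Real.sqrt t * Real.sqrt t) / (N * N) * (v z i ^ 2) := by
          intro i _; rw [hp]; field_simp
        rw [Finset.sum_congr rfl e, ← Finset.mul_sum, ← hNsq, est]
        field_simp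
      have e2 : (∑ i, p i * q i) - z * (∑ i, p i) = Real.sqrt t * N := by
        have e : ∀ i ∈ Finset.univ, p i * q i - z * p i
            = Real.sqrt t / N * (v z i ^ 2) := by
          intro i _; rw [hp, ← hvsq z i]; ring
        calc (∑ i, p i * q i) - z * (∑ i, p i)
            = ∑ i, (p i * q i - z * p i) := by
              rw [Finset.sum_sub_distrib, ← Finset.mul_sum]
          _ = ∑ i, Real.sqrt t / N * (v z i ^ 2) := Finset.sum_congr rfl e
          _ = Real.sqrt t / N * ∑ i, v z i ^ 2 := by rw [← Finset.mul_sum]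
          _ = Real.sqrt t * N := by rw [← hNsq]; field_simp
      have hup : 0 ≤ ∑ i, u i * p i :=
        Finset.sum_nonneg fun i _ => mul_nonneg (hu i) (hp0 i)
      have hM' := hM p
      have hw0 : w * ((∑ i, p i * p i) - t) = 0 := by rw [hpp]; ring
      have hz1 : z * ((∑ i, p i) - 1) = z * (∑ i, p i) - z := by ring
      linarith
    · push_neg at hz
      have hM' := hM (fun _ => 0)
      simp only [mul_zero, zero_mul, Finset.sum_const_zero, zero_sub, mul_neg,
        sub_neg_eq_add, zero_add, add_zero, zero_div] at hM'
      nlinarith [mul_nonneg hw ht0.le]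
  · -- Part (2)
    set C : Set (Fin n → ℝ) :=
      {p | (∀ i, 0 ≤ p i) ∧ ∑ i, p i = 1 ∧ ∑ i, p i * p i ≤ t} with hC
    have hunif : (fun _ => (n:ℝ)⁻¹) ∈ C := by
      have hs1 : ∑ _i : Fin n, (n:ℝ)⁻¹ = 1 := by
        rw [Finset.sum_const, Finset.card_univ, Fintype.card_fin, nsmul_eq_mul]
        field_simp
      refine ⟨fun i => by positivity, hs1, ?_⟩
      have hs2 : ∑ _i : Fin n, (n:ℝ)⁻¹ * (n:ℝ)⁻¹ = (n:ℝ)⁻¹ := by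
        rw [Finset.sum_const, Finset.card_univ, Fintype.card_fin, nsmul_eq_mul]
        field_simp
      rw [hs2, inv_eq_one_div]
      linarith
    have hCclosed : IsClosed C := by
      have h1 : IsClosed {p : Fin n → ℝ | ∀ i, 0 ≤ p i} := by
        have : {p : Fin n → ℝ | ∀ i, 0 ≤ p i} = ⋂ i, {p | 0 ≤ p i} := by
          ext p; simp
        rw [this]
        exact isClosed_iInter fun i => isClosed_le continuous_const (continuous_apply i)
      have h2 : IsClosed {p : Fin n → ℝ | ∑ i, p i = 1} :=
        isClosed_eq (continuous_finset_sum _ fun i _ => continuous_apply i) continuous_const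
      have h3 : IsClosed {p : Fin n → ℝ | ∑ i, p i * p i ≤ t} :=
        isClosed_le (continuous_finset_sum _ fun i _ =>
          (continuous_apply i).mul (continuous_apply i)) continuous_const
      exact h1.inter (h2.inter h3)
    have hCsub : C ⊆ Set.Icc 0 1 := by
      rintro p ⟨hp0, hp1, -⟩
      constructor
      · intro i; exact hp0 i
      · intro i
        calc p i ≤ ∑ i, p i :=
              Finset.single_le_sum (fun i _ => hp0 i) (Finset.mem_univ i)
          _ = 1 := hp1
    have hCcomp : IsCompact C := IsCompact.of_isClosed_subset isCompact_Icc hCclosed hCsub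
    have hfc : Continuous fun p : Fin n → ℝ => ∑ i, p i * q i :=
      continuous_finset_sum _ fun i _ => (continuous_apply i).mul continuous_const
    obtain ⟨p₀, hp₀, hmax⟩ := hCcomp.exists_isMaxOn ⟨_, hunif⟩ hfc.continuousOn
    set m : ℝ := ∑ i, p₀ i * q i with hm
    have hm_ub : ∀ z, m ≤ h z := fun z => hwd z p₀ hp₀.1 hp₀.2.1 hp₀.2.2
    have hm_max : ∀ p ∈ C, ∑ i, p i * q i ≤ m := hmax
    -- continuity facts
    have hScont : Continuous fun z => ∑ i, v z i := by
      rw [hv]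
      exact continuous_finset_sum _ fun i _ =>
        continuous_const.max (continuous_const.sub continuous_id)
    have hNcont : Continuous fun z => Real.sqrt (∑ i, v z i ^ 2) := by
      apply Real.continuous_sqrt.comp
      rw [hv]
      exact continuous_finset_sum _ fun i _ =>
        (continuous_const.max (continuous_const.sub continuous_id)).pow 2
    have hmem : m ∈ Set.range h := by
      by_cases hcase : ∀ z, z < qm → Real.sqrt (∑ i, v z i ^ 2) ≤ Real.sqrt t * ∑ i, v z i
      · -- degenerate case: optimum value is qm, attained at z = qm
        refine ⟨qm, ?_⟩
        have hqmeq : h qm = qm := by rw [hh]; simp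
        rw [hqmeq]
        have hle1 : m ≤ qm := by have := hm_ub qm; rwa [hqmeq] at this
        refine le_antisymm ?_ hle1
        by_contra hlt
        push_neg at hlt
        set z : ℝ := (m + qm) / 2 with hzdef
        have hz1 : m < z := by rw [hzdef]; linarith
        have hz2 : z < qm := by rw [hzdef]; linarith
        set S : ℝ := ∑ i, v z i with hS
        have hSpos : 0 < S := by
          have hj0 : 0 < v z j := by
            have : q j - z > 0 := by rw [← hj]; exact sub_pos.mpr hz2
            linarith [hvle z j]
          exact lt_of_lt_of_le hj0
            (Finset.single_le_sum (f := fun i => v z i) (fun i _ => hv0 z i)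
              (Finset.mem_univ j))
        have hsq : ∑ i, v z i ^ 2 ≤ t * S ^ 2 := by
          have h1 := hcase z hz2
          nlinarith [Real.sq_sqrt (Finset.sum_nonneg fun i (_ : i ∈ Finset.univ) =>
              sq_nonneg (v z i)), Real.sq_sqrt ht0.le, Real.sqrt_nonneg (∑ i, v z i ^ 2),
            Real.sqrt_nonneg t]
        set p : Fin n → ℝ := fun i => v z i / S with hp
        have hpC : p ∈ C := by
          refine ⟨fun i => div_nonneg (hv0 z i) hSpos.le, ?_, ?_⟩
          · rw [hp]; simp only; rw [← Finset.sum_div]; field_simp; exact hS.symm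
          · have e : ∀ i ∈ Finset.univ, p i * p i = v z i ^ 2 / S ^ 2 := by
              intro i _; rw [hp]; field_simp
            rw [Finset.sum_congr rfl e, ← Finset.sum_div]
            rw [div_le_iff₀ (by positivity)]
            linarith
        have hval : z ≤ ∑ i, p i * q i := by
          have e : ∀ i ∈ Finset.univ, p i * q i = (v z i ^ 2 + z * v z i) / S := by
            intro i _; rw [hp]
            have h2 : v z i * q i = v z i ^ 2 + z * v z i := by
              have := hvsq z i; nlinarith [hvsq z i]
            field_simp
            linarith [h2]
          rw [Finset.sum_congr rfl e, ← Finset.sum_div]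
          rw [le_div_iff₀ hSpos]
          have h3 : ∑ i, (v z i ^ 2 + z * v z i) = (∑ i, v z i ^ 2) + z * S := by
            rw [Finset.sum_add_distrib, ← Finset.mul_sum]
          rw [h3]
          have h4 : 0 ≤ ∑ i, v z i ^ 2 :=
            Finset.sum_nonneg fun i _ => sq_nonneg _
          linarith
        have := hm_max p hpC
        linarith
      · -- main case: the dual optimum is interior
        push_neg at hcase
        obtain ⟨z₁, hz₁qm, hz₁⟩ := hcase
        set qmin : ℝ := Finset.univ.inf' hne q with hqmin
        have hqminle : ∀ i, qmin ≤ q i := fun i => Finset.inf'_le q (Finset.mem_univ i)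
        have hqminn : (n:ℝ) * qmin ≤ 1 := by
          have : ∑ _i : Fin n, qmin ≤ ∑ i, q i :=
            Finset.sum_le_sum fun i _ => hqminle i
          rw [Finset.sum_const, Finset.card_univ, Fintype.card_fin, nsmul_eq_mul] at this
          linarith
        have htn : 1 - t * n < 0 := by
          have := (div_lt_iff₀ hn0).mp ht1
          nlinarith
        set z₀ : ℝ := min z₁ (min qmin ((qm - t) / (1 - t * n))) - 1 with hz₀def
        have h01 : z₀ < z₁ := by
          have := min_le_left z₁ (min qmin ((qm - t) / (1 - t * n)))
          rw [hz₀def]; linarith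
        have h0min : z₀ < qmin := by
          have h1 := min_le_right z₁ (min qmin ((qm - t) / (1 - t * n)))
          have h2 := min_le_left qmin ((qm - t) / (1 - t * n))
          rw [hz₀def]; linarith
        have h0r : z₀ < (qm - t) / (1 - t * n) := by
          have h1 := min_le_right z₁ (min qmin ((qm - t) / (1 - t * n)))
          have h2 := min_le_right qmin ((qm - t) / (1 - t * n))
          rw [hz₀def]; linarith
        have hkey : qm - z₀ < t * (1 - n * z₀) := by
          have := (lt_div_iff_of_neg htn).mp h0r
          nlinarith
        have hvz₀ : ∀ i, v z₀ i = q i - z₀ := by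
          intro i; rw [hv]
          exact max_eq_right (by linarith [hqminle i])
        have hS₀ : ∑ i, v z₀ i = 1 - n * z₀ := by
          rw [Finset.sum_congr rfl fun i _ => hvz₀ i, Finset.sum_sub_distrib, hq,
            Finset.sum_const, Finset.card_univ, Fintype.card_fin, nsmul_eq_mul]
        have hS₀pos : 0 < 1 - n * z₀ := by
          have := mul_lt_mul_of_pos_left h0min hn0
          linarith
        have hsum₀ : ∑ i, v z₀ i ^ 2 ≤ (qm - z₀) * (1 - n * z₀) := by
          have e : ∀ i ∈ Finset.univ, v z₀ i ^ 2 ≤ (qm - z₀) * v z₀ i := by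
            intro i _
            have h1 : v z₀ i ≤ qm - z₀ := by rw [hvz₀ i]; linarith [hqle i]
            nlinarith [hv0 z₀ i]
          calc ∑ i, v z₀ i ^ 2 ≤ ∑ i, (qm - z₀) * v z₀ i := Finset.sum_le_sum e
            _ = (qm - z₀) * ∑ i, v z₀ i := by rw [← Finset.mul_sum]
            _ = (qm - z₀) * (1 - n * z₀) := by rw [hS₀]
        have h₀lt : Real.sqrt (∑ i, v z₀ i ^ 2) < Real.sqrt t * ∑ i, v z₀ i := by
          have hlt2 : ∑ i, v z₀ i ^ 2 < t * (1 - n * z₀) ^ 2 := by nlinarith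
          calc Real.sqrt (∑ i, v z₀ i ^ 2) < Real.sqrt (t * (1 - n * z₀) ^ 2) :=
                Real.sqrt_lt_sqrt (Finset.sum_nonneg fun i _ => sq_nonneg _) hlt2
            _ = Real.sqrt t * (1 - n * z₀) := by
                rw [Real.sqrt_mul ht0.le, Real.sqrt_sq hS₀pos.le]
            _ = Real.sqrt t * ∑ i, v z₀ i := by rw [hS₀]
        -- intermediate value theorem
        set g : ℝ → ℝ := fun z => Real.sqrt t * ∑ i, v z i - Real.sqrt (∑ i, v z i ^ 2)
          with hg
        have hgcont : Continuous g := (continuous_const.mul hScont).sub hNcont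
        have h00 : (0:ℝ) ∈ Set.Icc (g z₁) (g z₀) := by
          constructor
          · rw [hg]; simp only; linarith
          · rw [hg]; simp only; linarith
        obtain ⟨z₂, hz₂mem, hgz₂⟩ :=
          intermediate_value_Icc' h01.le hgcont.continuousOn h00
        have hz₂qm : z₂ < qm := lt_of_le_of_lt hz₂mem.2 hz₁qm
        set S : ℝ := ∑ i, v z₂ i with hS
        set N : ℝ := Real.sqrt (∑ i, v z₂ i ^ 2) with hN
        have hNS : Real.sqrt t * S = N := by
          have : g z₂ = 0 := hgz₂
          rw [hg] at this; simp only at this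
          rw [hS, hN]; linarith
        have hNp : 0 < N := hNpos z₂ hz₂qm
        have hSpos : 0 < S := by
          nlinarith [Real.sqrt_pos.mpr ht0, Real.sqrt_nonneg t]
        have hNsq : N ^ 2 = ∑ i, v z₂ i ^ 2 := Real.sq_sqrt
          (Finset.sum_nonneg fun i _ => sq_nonneg _)
        have htS2 : ∑ i, v z₂ i ^ 2 = t * S ^ 2 := by
          rw [← hNsq, ← hNS, mul_pow, Real.sq_sqrt ht0.le]
        set p : Fin n → ℝ := fun i => v z₂ i / S with hp
        have hpC : p ∈ C := by
          refine ⟨fun i => div_nonneg (hv0 z₂ i) hSpos.le, ?_, ?_⟩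
          · rw [hp]; simp only; rw [← Finset.sum_div, ← hS]; field_simp
          · have e : ∀ i ∈ Finset.univ, p i * p i = v z₂ i ^ 2 / S ^ 2 := by
              intro i _; rw [hp]; field_simp
            rw [Finset.sum_congr rfl e, ← Finset.sum_div, htS2]
            rw [div_le_iff₀ (by positivity)]
        have hval : ∑ i, p i * q i = t * S + z₂ := by
          have e : ∀ i ∈ Finset.univ, p i * q i = (v z₂ i ^ 2 + z₂ * v z₂ i) / S := by
            intro i _; rw [hp]
            have h2 : v z₂ i * q i = v z₂ i ^ 2 + z₂ * v z₂ i := by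
              nlinarith [hvsq z₂ i]
            field_simp
            linarith [h2]
          rw [Finset.sum_congr rfl e, ← Finset.sum_div]
          have h3 : ∑ i, (v z₂ i ^ 2 + z₂ * v z₂ i) = (∑ i, v z₂ i ^ 2) + z₂ * S := by
            rw [Finset.sum_add_distrib, ← Finset.mul_sum, hS]
          rw [h3, htS2]
          field_simp
        have hhz₂ : h z₂ = t * S + z₂ := by
          rw [hh]; simp only
          rw [if_pos hz₂qm, ← hN, ← hNS, ← mul_assoc, Real.mul_self_sqrt ht0.le]
        refine ⟨z₂, ?_⟩
        rw [hhz₂]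
        have hle1 : ∑ i, p i * q i ≤ m := hm_max p hpC
        have hle2 : m ≤ t * S + z₂ := by
          have := hm_ub z₂; rwa [hhz₂] at this
        rw [hval] at hle1
        linarith
    exact ⟨m, ⟨hmem, by rintro x ⟨z, rfl⟩; exact hm_ub z⟩,
      ⟨p₀, hp₀, rfl⟩, by rintro x ⟨p, hp, rfl⟩; exact hm_max p hp⟩
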